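/- Let $\{r_n\} \subset (0,1)$ be a sequence decreasing monotonically to zero with $r_n/r_{n+1} - 1 = a r_n + o(r_n)$ for some $a \ge 0$, and let $\{s_n\}$ be a sequence of positive numbers satisfying $s_{n+1} \le (1 - r_n) s_n + \varepsilon_n r_n$ where $\varepsilon_n \to 0$. Then $s_n \to 0$. -/

import Mathlib

open Filter Asymptotics

/-- Lemma 3 of the paper: if `r n ∈ (0,1)` decreases monotonically to zero with
`r n / r (n+1) - 1 = a r n + o(r n)` for some `a ≥ 0`, and `s n > 0` satisfies
`s (n+1) ≤ (1 - r n) s n + ε n * r n` with `ε n → 0`, then `s n → 0`. -/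
theorem stmt2 (r : ℕ → ℝ)
    (hpos : ∀ n, 0 < r n) (hlt1 : ∀ n, r n < 1)
    (hmono : ∀ n, r (n + 1) ≤ r n)
    (hlim : Tendsto r atTop (nhds 0))
    (a : ℝ) (ha : 0 ≤ a)
    (hrel : (fun n => r n / r (n + 1) - 1 - a * r n) =o[atTop] r)
    (s ε : ℕ → ℝ)
    (hs : ∀ n, 0 < s n)
    (hε : ∀ n, 0 ≤ ε n)
    (hεlim : Tendsto ε atTop (nhds 0))
    (hrec : ∀ n, s (n + 1) ≤ (1 - r n) * s n + ε n * r n) :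
    Tendsto s atTop (nhds 0) := by
  have hr0 : ∀ n, r n ≠ 0 := fun n => (hpos n).ne'
  -- Step 1: `1/r(n+1) - 1/r n → a`.
  have hd : Tendsto (fun n => 1 / r (n + 1) - 1 / r n) atTop (nhds a) := by
    have h1 := hrel.tendsto_div_nhds_zero
    have h2 : (fun n => (r n / r (n + 1) - 1 - a * r n) / r n)
        = fun n => (1 / r (n + 1) - 1 / r n) - a := by
      funext n
      have h1 := hr0 n
      have h2 := hr0 (n + 1)
      field_simp
    rw [h2] at h1
    have h3 := h1.add_const a
    simpa using h3
  -- Step 2: eventual bound `1/r(n+1) - 1/r n ≤ a + 1`.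
  obtain ⟨N0, hN0⟩ : ∃ N0, ∀ n ≥ N0, 1 / r (n + 1) - 1 / r n ≤ a + 1 := by
    have := Metric.tendsto_atTop.1 hd 1 one_pos
    obtain ⟨N0, hN0⟩ := this
    exact ⟨N0, fun n hn => by
      have := hN0 n hn
      rw [Real.dist_eq] at this
      have := abs_lt.1 this
      linarith [this.2]⟩
  -- Step 3: `1/r (N0 + m) ≤ 1/r N0 + (a+1) m`.
  have hbound : ∀ m : ℕ, 1 / r (N0 + m) ≤ 1 / r N0 + (a + 1) * m := by
    intro m
    induction m with
    | zero => simp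
    | succ k ih =>
      have h := hN0 (N0 + k) (by omega)
      have : (N0 + k) + 1 = N0 + (k + 1) := by omega
      rw [this] at h
      push_cast
      linarith
  set C := 1 / r N0 + a + 1 with hCdef
  have hrN0 : 0 < 1 / r N0 := one_div_pos.2 (hpos N0)
  have hCpos : 0 < C := by rw [hCdef]; linarith
  -- Step 4: lower bound `r (N0 + m) ≥ C⁻¹ / (m+1)`.
  have hrlow : ∀ m : ℕ, C⁻¹ * (1 / ((m : ℝ) + 1)) ≤ r (N0 + m) := by
    intro m
    have hm : (0:ℝ) ≤ (m:ℝ) := Nat.cast_nonneg m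
    have hB : 0 < 1 / r N0 + (a + 1) * m := by nlinarith
    have h1 : 1 ≤ (1 / r N0 + (a + 1) * m) * r (N0 + m) :=
      (div_le_iff₀ (hpos (N0 + m))).1 (hbound m)
    have hEq : C⁻¹ * (1 / ((m : ℝ) + 1)) = 1 / (C * ((m:ℝ) + 1)) := by
      field_simp
    rw [hEq, div_le_iff₀ (mul_pos hCpos (by positivity))]
    have hC2 : 1 / r N0 + (a + 1) * m ≤ C * ((m:ℝ) + 1) := by
      rw [hCdef]; nlinarith
    calc (1:ℝ) ≤ (1 / r N0 + (a + 1) * m) * r (N0 + m) := h1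
      _ = r (N0 + m) * (1 / r N0 + (a + 1) * m) := mul_comm _ _
      _ ≤ r (N0 + m) * (C * ((m:ℝ) + 1)) := mul_le_mul_of_nonneg_left hC2 (hpos _).le
  -- Step 5: `r` is not summable.
  have hnotsum : ¬ Summable r := by
    intro hsum
    have h1 : Summable (fun m => r (m + N0)) := (summable_nat_add_iff N0).2 hsum
    have h2 : Summable (fun m : ℕ => C⁻¹ * (1 / ((m : ℝ) + 1))) := by
      apply Summable.of_nonneg_of_le (fun m => by positivity) (fun m => ?_) h1
      simpa [add_comm] using hrlow m
    have h3 : Summable (fun m : ℕ => 1 / ((m : ℝ) + 1)) :=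
      (summable_mul_left_iff (inv_ne_zero hCpos.ne')).1 h2
    have h4 : Summable (fun n : ℕ => 1 / (n : ℝ)) := by
      rw [← summable_nat_add_iff 1]
      simpa using h3
    exact Real.not_summable_one_div_natCast h4
  -- Step 6: partial sums diverge (from every starting point).
  have hdiv : ∀ N : ℕ, Tendsto (fun m => ∑ k ∈ Finset.range m, r (N + k)) atTop atTop := by
    intro N
    have hns : ¬ Summable (fun k => r (N + k)) := by
      intro h
      exact hnotsum ((summable_nat_add_iff N).1 (by simpa [add_comm] using h))
    exact (not_summable_iff_tendsto_nat_atTop_of_nonneg (fun k => (hpos _).le)).1 hns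
  -- Step 7: main argument.
  rw [NormedAddCommGroup.tendsto_nhds_zero]
  intro δ hδ
  obtain ⟨N, hN⟩ : ∃ N, ∀ n ≥ N, ε n < δ / 2 := by
    obtain ⟨N, hN⟩ := Metric.tendsto_atTop.1 hεlim (δ / 2) (half_pos hδ)
    exact ⟨N, fun n hn => by
      have := hN n hn
      rw [Real.dist_eq, sub_zero] at this
      calc ε n ≤ |ε n| := le_abs_self _
        _ < δ / 2 := this⟩
  -- key inductive bound
  have key : ∀ m : ℕ, s (N + m) ≤ (∏ k ∈ Finset.range m, (1 - r (N + k))) * s N + δ / 2 := by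
    intro m
    induction m with
    | zero => simp; linarith [half_pos hδ]
    | succ k ih =>
      have ht := hrec (N + k)
      have hε' : ε (N + k) * r (N + k) ≤ δ / 2 * r (N + k) :=
        mul_le_mul_of_nonneg_right (le_of_lt (hN _ (by omega))) (hpos _).le
      have h1r : 0 ≤ 1 - r (N + k) := by linarith [hlt1 (N + k)]
      have hPnn : 0 ≤ ∏ x ∈ Finset.range k, (1 - r (N + x)) :=
        Finset.prod_nonneg (fun i _ => by linarith [hlt1 (N + i)])
      have heq : N + k + 1 = N + (k + 1) := by omega
      rw [heq] at ht
      rw [Finset.prod_range_succ]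
      have h2 := mul_le_mul_of_nonneg_left ih h1r
      nlinarith [hpos (N + k), hs (N + k)]
  -- the product tends to zero (times `s N`)
  have hP0 : Tendsto (fun m => (∏ k ∈ Finset.range m, (1 - r (N + k))) * s N)
      atTop (nhds 0) := by
    apply squeeze_zero
      (fun m => mul_nonneg (Finset.prod_nonneg (fun i _ => by linarith [hlt1 (N + i)])) (hs N).le)
      (fun m => ?_)
      (g := fun m => Real.exp (-(∑ k ∈ Finset.range m, r (N + k))) * s N)
    · have hcomp : Tendsto (fun m => Real.exp (-(∑ k ∈ Finset.range m, r (N + k))))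
          atTop (nhds 0) :=
        Real.tendsto_exp_atBot.comp (tendsto_neg_atTop_atBot.comp (hdiv N))
      simpa using hcomp.mul_const (s N)
    · apply mul_le_mul_of_nonneg_right _ (hs N).le
      calc ∏ k ∈ Finset.range m, (1 - r (N + k))
          ≤ ∏ k ∈ Finset.range m, Real.exp (-(r (N + k))) := by
            apply Finset.prod_le_prod (fun i _ => by linarith [hlt1 (N + i)])
            intro i _
            have := Real.add_one_le_exp (-(r (N + i)))
            linarith
        _ = Real.exp (-(∑ k ∈ Finset.range m, r (N + k))) := by
            rw [← Real.exp_sum, Finset.sum_neg_distrib]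
  obtain ⟨M, hM⟩ : ∃ M, ∀ m ≥ M, (∏ k ∈ Finset.range m, (1 - r (N + k))) * s N < δ / 2 := by
    obtain ⟨M, hM⟩ := Metric.tendsto_atTop.1 hP0 (δ / 2) (half_pos hδ)
    exact ⟨M, fun m hm => by
      have := hM m hm
      rw [Real.dist_eq, sub_zero] at this
      calc (∏ k ∈ Finset.range m, (1 - r (N + k))) * s N ≤ |_| := le_abs_self _
        _ < δ / 2 := this⟩
  filter_upwards [eventually_ge_atTop (N + M)] with n hn
  have h1 := key (n - N)
  have h2 := hM (n - N) (by omega)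
  rw [show N + (n - N) = n by omega] at h1
  rw [Real.norm_eq_abs, abs_of_pos (hs n)]
  linarith
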